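/- Let X be a Banach space. The following are equivalent: (i) X has property [P]; (ii) the set {(x, x*) ∈ strexp(B_X) × SE(X) : ‖x*‖ = x*(x) = 1} is dense in Π(X) = {(x, x*) ∈ S_X × S_{X*} : x*(x) = 1}; (iii) X has property [P] witnessed by the function ε ↦ ε²/2. -/

import Mathlib

open Filter Topology RCLike Bornology


lemma ekeland_aux {X : Type} [NormedAddCommGroup X] [CompleteSpace X]
    (φ : X → ℝ) (hc : Continuous φ) (h0 : ∀ z : X, ‖z‖ ≤ 1 → 0 ≤ φ z)
    {δ : ℝ} (hδ : 0 < δ) {x : X} (hx : ‖x‖ ≤ 1) :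
    ∃ y : X, ‖y‖ ≤ 1 ∧ δ * ‖y - x‖ ≤ φ x - φ y ∧
      ∀ z : X, ‖z‖ ≤ 1 → φ y ≤ φ z + δ * ‖z - y‖ := by
  classical
  set S : X → Set X := fun w => {z | ‖z‖ ≤ 1 ∧ φ z + δ * ‖z - w‖ ≤ φ w} with hS
  have hmem : ∀ w : X, ‖w‖ ≤ 1 → w ∈ S w := by
    intro w hw; refine ⟨hw, by simp⟩
  have hbdd : ∀ w : X, BddBelow (φ '' S w) := by
    intro w
    exact ⟨0, by rintro r ⟨z, hz, rfl⟩; exact h0 z hz.1⟩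
  set m : X → ℝ := fun w => sInf (φ '' S w) with hm
  have key : ∀ (n : ℕ) (w : X), ‖w‖ ≤ 1 →
      ∃ z : X, z ∈ S w ∧ φ z ≤ m w + (1/2) ^ n := by
    intro n w hw
    have hne : (φ '' S w).Nonempty := ⟨φ w, w, hmem w hw, rfl⟩
    have : m w < m w + (1/2)^n := by
      have : (0:ℝ) < (1/2)^n := by positivity
      linarith
    obtain ⟨r, ⟨z, hz, rfl⟩, hr⟩ := exists_lt_of_csInf_lt hne this
    exact ⟨z, hz, hr.le⟩
  choose F hF1 hF2 using key
  -- the iterated sequence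
  set q : ℕ → {w : X // ‖w‖ ≤ 1} := fun n =>
    Nat.rec ⟨x, hx⟩ (fun n p => ⟨F n p.1 p.2, (hF1 n p.1 p.2).1⟩) n with hq
  set u : ℕ → X := fun n => (q n).1 with hu
  have hq0 : u 0 = x := rfl
  have hun : ∀ n, ‖u n‖ ≤ 1 := fun n => (q n).2
  have hstep : ∀ n, u (n+1) ∈ S (u n) := fun n => hF1 n (q n).1 (q n).2
  have hinf : ∀ n, φ (u (n+1)) ≤ m (u n) + (1/2)^n := fun n => hF2 n (q n).1 (q n).2
  have hdec : ∀ n, φ (u (n+1)) + δ * ‖u (n+1) - u n‖ ≤ φ (u n) := fun n => (hstep n).2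
  have hanti : Antitone (fun n => φ (u n)) := by
    apply antitone_nat_of_succ_le
    intro n
    have := hdec n
    have h1 : 0 ≤ δ * ‖u (n+1) - u n‖ := by positivity
    linarith
  -- chained distance estimate
  have hchain : ∀ n k : ℕ, δ * ‖u (n+k) - u n‖ ≤ φ (u n) - φ (u (n+k)) := by
    intro n k
    induction k with
    | zero => simp
    | succ k ih =>
      have h1 := hdec (n+k)
      have h2 : ‖u (n+(k+1)) - u n‖ ≤ ‖u (n+k+1) - u (n+k)‖ + ‖u (n+k) - u n‖ := by
        have : u (n+(k+1)) - u n = (u (n+k+1) - u (n+k)) + (u (n+k) - u n) := by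
          rw [show n+(k+1) = n+k+1 from rfl]; abel
        rw [this]; exact norm_add_le _ _
      have := mul_le_mul_of_nonneg_left h2 hδ.le
      rw [show n+(k+1) = n+k+1 from rfl] at *
      nlinarith
  -- Cauchy
  have hφbd : ∀ n, 0 ≤ φ (u n) := fun n => h0 _ (hun n)
  have hφtend : Tendsto (fun n => φ (u n)) atTop (𝓝 (⨅ n, φ (u n))) :=
    tendsto_atTop_ciInf hanti ⟨0, by rintro r ⟨n, rfl⟩; exact hφbd n⟩
  have hφcauchy : CauchySeq (fun n => φ (u n)) := hφtend.cauchySeq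
  have hcauchy : CauchySeq u := by
    rw [Metric.cauchySeq_iff] at hφcauchy ⊢
    intro ε hε
    obtain ⟨N, hN⟩ := hφcauchy (δ * ε) (by positivity)
    refine ⟨N, fun a ha b hb => ?_⟩
    rcases le_total b a with h | h
    · obtain ⟨k, rfl⟩ := Nat.exists_eq_add_of_le h
      have := hchain b k
      have h2 := hN (b+k) (le_trans hb (Nat.le_add_right _ _)) b hb
      rw [Real.dist_eq] at h2
      rw [dist_eq_norm]
      have : δ * ‖u (b+k) - u b‖ < δ * ε := by
        have := abs_lt.1 h2
        linarith [hchain b k]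
      exact lt_of_mul_lt_mul_left this hδ.le
    · obtain ⟨k, rfl⟩ := Nat.exists_eq_add_of_le h
      have h2 := hN (a+k) (le_trans ha (Nat.le_add_right _ _)) a ha
      rw [Real.dist_eq] at h2
      rw [dist_comm, dist_eq_norm]
      have : δ * ‖u (a+k) - u a‖ < δ * ε := by
        have := abs_lt.1 h2
        linarith [hchain a k]
      exact lt_of_mul_lt_mul_left this hδ.le
  obtain ⟨y, hy⟩ := cauchySeq_tendsto_of_complete hcauchy
  have hφy : Tendsto (fun n => φ (u n)) atTop (𝓝 (φ y)) :=
    ((hc.tendsto y).comp hy)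
  have hy1 : ‖y‖ ≤ 1 :=
    le_of_tendsto ((continuous_norm.tendsto y).comp hy) (Eventually.of_forall hun)
  -- distance from u n to y
  have hdisty : ∀ n, δ * ‖y - u n‖ ≤ φ (u n) - φ y := by
    intro n
    have h1 : Tendsto (fun k => δ * ‖u (n+k) - u n‖) atTop (𝓝 (δ * ‖y - u n‖)) := by
      apply Tendsto.const_mul
      have : Tendsto (fun k => u (n+k)) atTop (𝓝 y) := by
        simpa [Function.comp_def, Nat.add_comm n] using hy.comp (tendsto_add_atTop_nat n)
      exact ((continuous_norm.tendsto _).comp (this.sub tendsto_const_nhds))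
    have h2 : Tendsto (fun k => φ (u n) - φ (u (n+k))) atTop (𝓝 (φ (u n) - φ y)) := by
      apply Tendsto.const_sub
      simpa [Function.comp_def, Nat.add_comm n] using hφy.comp (tendsto_add_atTop_nat n)
    exact le_of_tendsto_of_tendsto' h1 h2 (fun k => hchain n k)
  refine ⟨y, hy1, ?_, ?_⟩
  · have := hdisty 0
    rw [hq0] at this
    linarith [this]
  · intro z hz
    by_contra hcon
    push_neg at hcon
    -- z ∈ S (u n) for all n
    have hzS : ∀ n, z ∈ S (u n) := by
      intro n
      refine ⟨hz, ?_⟩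
      have h1 : ‖z - u n‖ ≤ ‖z - y‖ + ‖y - u n‖ := by
        have : z - u n = (z - y) + (y - u n) := by abel
        rw [this]; exact norm_add_le _ _
      have h2 := hdisty n
      have h3 := mul_le_mul_of_nonneg_left h1 hδ.le
      rw [mul_add] at h3
      linarith
    have hmz : ∀ n, m (u n) ≤ φ z := fun n =>
      csInf_le (hbdd (u n)) ⟨z, hzS n, rfl⟩
    have h4 : ∀ n, φ (u (n+1)) ≤ φ z + (1/2)^n := fun n => le_trans (hinf n) (by linarith [hmz n])
    have h5 : Tendsto (fun n => φ (u (n+1))) atTop (𝓝 (φ y)) :=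
      hφy.comp (tendsto_add_atTop_nat 1)
    have h6 : Tendsto (fun n : ℕ => φ z + (1/2:ℝ)^n) atTop (𝓝 (φ z + 0)) :=
      tendsto_const_nhds.add (tendsto_pow_atTop_nhds_zero_of_lt_one (by norm_num) (by norm_num))
    have h7 : φ y ≤ φ z + 0 := le_of_tendsto_of_tendsto' h5 h6 h4
    have h8 : 0 ≤ δ * ‖z - y‖ := by positivity
    linarith

lemma real_bpb_core {E : Type} [NormedAddCommGroup E] [NormedSpace ℝ E]
    (fr : E →L[ℝ] ℝ) (hfr : ‖fr‖ = 1) {y : E} (hy : ‖y‖ ≤ 1)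
    {δ η : ℝ} (hδ : 0 < δ) (hδ1 : δ < 1) (hη : 0 ≤ η) (hηδ : η + δ < 1)
    (hfy : 1 - η ≤ fr y) (hmax : ∀ z : E, ‖z‖ ≤ 1 → fr z ≤ fr y + δ * ‖z - y‖) :
    ∃ G : E →L[ℝ] ℝ, ‖G‖ = 1 ∧ G y = 1 ∧ ‖y‖ = 1 ∧ ‖fr - G‖ ≤ 2 * δ := by
  classical
  set U : Set E := {w | δ * ‖w‖ < fr w} with hU
  have hUopen : IsOpen U := by
    have : U = (fun w => δ * ‖w‖ - fr w) ⁻¹' (Set.Iio 0) := by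
      ext w; simp [hU, sub_neg]
    rw [this]
    exact (((continuous_norm.const_smul δ).sub fr.continuous)).isOpen_preimage _ isOpen_Iio
  have hUconv : Convex ℝ U := by
    intro a ha b hb ca cb hca hcb hab
    simp only [hU, Set.mem_setOf_eq] at ha hb ⊢
    rcases eq_or_lt_of_le hca with h | h
    · subst h
      have : cb = 1 := by linarith
      subst this; simpa using hb
    · have h1 : ‖ca • a + cb • b‖ ≤ ca * ‖a‖ + cb * ‖b‖ := by
        calc ‖ca • a + cb • b‖ ≤ ‖ca • a‖ + ‖cb • b‖ := norm_add_le _ _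
        _ = ca * ‖a‖ + cb * ‖b‖ := by rw [norm_smul, norm_smul, Real.norm_eq_abs,
            Real.norm_eq_abs, abs_of_pos h, abs_of_nonneg hcb]
      have h2 : fr (ca • a + cb • b) = ca * fr a + cb * fr b := by
        simp [map_add, map_smul, smul_eq_mul]
      rw [h2]
      have h3 : ca * (δ * ‖a‖) < ca * fr a := (mul_lt_mul_iff_right₀ h).2 ha
      have h4 : cb * (δ * ‖b‖) ≤ cb * fr b := mul_le_mul_of_nonneg_left hb.le hcb
      nlinarith [mul_le_mul_of_nonneg_left h1 hδ.le]
  obtain ⟨u₀, hu₀⟩ : ∃ u₀, u₀ ∈ U := by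
    by_contra hcon
    push_neg at hcon
    simp only [hU, Set.mem_setOf_eq, not_lt] at hcon
    have : ‖fr‖ ≤ δ := by
      apply ContinuousLinearMap.opNorm_le_bound _ hδ.le
      intro z
      rw [Real.norm_eq_abs, abs_le]
      constructor
      · have h1 := hcon (-z)
        rw [map_neg, norm_neg] at h1
        linarith
      · exact hcon z
    rw [hfr] at this
    linarith
  have hu₀' : δ * ‖u₀‖ < fr u₀ := hu₀
  set s : Set E := {z | δ * ‖z - y‖ < fr (z - y)} with hs
  have hsopen : IsOpen s := by
    have : s = (fun z => z - y) ⁻¹' U := by ext z; simp [hs, hU]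
    rw [this]
    exact hUopen.preimage (continuous_id.sub continuous_const)
  have hsconv : Convex ℝ s := by
    have : s = (fun w => y + w) '' U := by
      ext z
      simp only [hs, hU, Set.mem_image, Set.mem_setOf_eq]
      constructor
      · intro h; exact ⟨z - y, h, by abel⟩
      · rintro ⟨w, hw, rfl⟩
        rw [add_sub_cancel_left]
        exact hw
    rw [this]
    exact hUconv.translate y
  have hdisj : Disjoint s (Metric.closedBall (0:E) 1) := by
    rw [Set.disjoint_left]
    intro z hzs hzB
    rw [mem_closedBall_zero_iff] at hzB
    have h1 := hmax z hzB
    simp only [hs, Set.mem_setOf_eq, map_sub] at hzs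
    linarith
  obtain ⟨ψ, c, h₁, h₂⟩ := _root_.geometric_hahn_banach_open hsconv hsopen
    (convex_closedBall (0:E) 1) hdisj
  have hyB : y ∈ Metric.closedBall (0:E) 1 := by rwa [mem_closedBall_zero_iff]
  have hcy : c ≤ ψ y := h₂ y hyB
  have hyt : ∀ t : ℝ, 0 < t → y + t • u₀ ∈ s := by
    intro t ht
    simp only [hs, Set.mem_setOf_eq, add_sub_cancel_left]
    rw [map_smul, smul_eq_mul, norm_smul, Real.norm_eq_abs, abs_of_pos ht]
    calc δ * (t * ‖u₀‖) = t * (δ * ‖u₀‖) := by ring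
    _ < t * fr u₀ := (mul_lt_mul_iff_right₀ ht).2 hu₀'
  have hψyc : ψ y ≤ c := by
    have htend : Tendsto (fun t : ℝ => ψ (y + t • u₀)) (𝓝[>] 0) (𝓝 (ψ y)) := by
      have hcont : ContinuousAt (fun t : ℝ => ψ (y + t • u₀)) 0 := by
        apply ψ.continuous.continuousAt.comp
        fun_prop
      have h := hcont.tendsto
      simp only [zero_smul, add_zero] at h
      exact h.mono_left nhdsWithin_le_nhds
    refine le_of_tendsto htend ?_
    filter_upwards [self_mem_nhdsWithin] with t ht
    exact (h₁ _ (hyt t ht)).le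
  have hψy : ψ y = c := le_antisymm hψyc hcy
  have hUpos : ∀ w ∈ U, 0 < -ψ w := by
    intro w hw
    have hws : y + w ∈ s := by
      simp only [hs, Set.mem_setOf_eq, add_sub_cancel_left]
      exact hw
    have h3 := h₁ _ hws
    rw [map_add, hψy] at h3
    linarith
  have hBle : ∀ b : E, ‖b‖ ≤ 1 → -ψ b ≤ -ψ y := by
    intro b hb
    have := h₂ b (by rwa [mem_closedBall_zero_iff])
    rw [hψy]; linarith
  set r : ℝ := -ψ y with hr
  have hr0 : 0 < r := by
    have h3 : u₀ ≠ 0 := by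
      intro h
      rw [h] at hu₀'
      simp at hu₀'
    have h1 := hUpos u₀ hu₀
    have hz0 : (0:ℝ) < ‖u₀‖ := norm_pos_iff.2 h3
    have h2 : ‖(‖u₀‖)⁻¹ • u₀‖ ≤ 1 := by
      rw [norm_smul, Real.norm_eq_abs, abs_of_pos (by positivity),
        inv_mul_cancel₀ hz0.ne']
    have h4 := hBle _ h2
    rw [map_smul, smul_eq_mul] at h4
    have h5 : 0 < (‖u₀‖)⁻¹ * (-ψ u₀) := by positivity
    nlinarith
  have hnormle : ∀ z : E, ‖z‖ ≤ 1 → |ψ z| ≤ r := by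
    intro z hz
    have h4 := hBle z hz
    have h5 := hBle (-z) (by rwa [norm_neg])
    rw [map_neg, neg_neg] at h5
    exact abs_le.2 ⟨by linarith, by linarith⟩
  have hnorm₀ : ‖-ψ‖ = r := by
    apply le_antisymm
    · apply ContinuousLinearMap.opNorm_le_bound _ hr0.le
      intro z
      rcases eq_or_ne z 0 with rfl | hz
      · simp
      · have hz0 : (0:ℝ) < ‖z‖ := norm_pos_iff.2 hz
        have h2 : ‖(‖z‖)⁻¹ • z‖ ≤ 1 := by
          rw [norm_smul, Real.norm_eq_abs, abs_of_pos (by positivity),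
            inv_mul_cancel₀ hz0.ne']
        have h6 := hnormle _ h2
        rw [map_smul, smul_eq_mul, abs_mul, abs_of_pos (by positivity : (0:ℝ) < (‖z‖)⁻¹)] at h6
        have h7 : ‖(-ψ) z‖ = |ψ z| := by
          rw [ContinuousLinearMap.neg_apply, Real.norm_eq_abs, abs_neg]
        rw [h7]
        calc |ψ z| = ‖z‖ * ((‖z‖)⁻¹ * |ψ z|) := by field_simp
        _ ≤ ‖z‖ * r := mul_le_mul_of_nonneg_left h6 hz0.le
        _ = r * ‖z‖ := mul_comm _ _
    · calc r = -ψ y := hr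
      _ ≤ ‖(-ψ) y‖ := by rw [ContinuousLinearMap.neg_apply]; exact le_abs_self _
      _ ≤ ‖-ψ‖ * ‖y‖ := ContinuousLinearMap.le_opNorm _ _
      _ ≤ ‖-ψ‖ * 1 := mul_le_mul_of_nonneg_left hy (norm_nonneg _)
      _ = ‖-ψ‖ := mul_one _
  have hy1 : ‖y‖ = 1 := by
    refine le_antisymm hy ?_
    have h8 : r ≤ r * ‖y‖ := by
      calc r = -ψ y := hr
      _ ≤ ‖(-ψ) y‖ := by rw [ContinuousLinearMap.neg_apply]; exact le_abs_self _
      _ ≤ ‖-ψ‖ * ‖y‖ := ContinuousLinearMap.le_opNorm _ _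
      _ = r * ‖y‖ := by rw [hnorm₀]
    nlinarith
  set G : E →L[ℝ] ℝ := r⁻¹ • (-ψ) with hG
  have hGapp : ∀ z : E, G z = r⁻¹ * (-ψ z) := by
    intro z
    simp [hG, ContinuousLinearMap.smul_apply, ContinuousLinearMap.neg_apply, smul_eq_mul]
  have hGy : G y = 1 := by
    rw [hGapp, ← hr, inv_mul_cancel₀ hr0.ne']
  have hGnorm : ‖G‖ = 1 := by
    apply le_antisymm
    · apply ContinuousLinearMap.opNorm_le_bound _ zero_le_one
      intro z
      rw [hGapp, Real.norm_eq_abs, abs_mul, abs_of_pos (by positivity : (0:ℝ) < r⁻¹), abs_neg]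
      have h6 : |ψ z| ≤ r * ‖z‖ := by
        have := ContinuousLinearMap.le_opNorm (-ψ) z
        rw [hnorm₀, ContinuousLinearMap.neg_apply, Real.norm_eq_abs, abs_neg] at this
        exact this
      calc r⁻¹ * |ψ z| ≤ r⁻¹ * (r * ‖z‖) := mul_le_mul_of_nonneg_left h6 (by positivity)
      _ = 1 * ‖z‖ := by field_simp
    · have := ContinuousLinearMap.le_opNorm G y
      rw [hGy, hy1, mul_one, Real.norm_eq_abs] at this
      calc (1:ℝ) = |1| := by norm_num
      _ ≤ ‖G‖ := this
  have hGU : ∀ w ∈ U, 0 < G w := by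
    intro w hw
    rw [hGapp]
    have := hUpos w hw
    positivity
  have hker : ∀ z : E, G z = 0 → |fr z| ≤ δ * ‖z‖ := by
    intro z hz
    have hside : ∀ w : E, G w = 0 → fr w ≤ δ * ‖w‖ := by
      intro w hw
      by_contra hcon
      push_neg at hcon
      have hwU : w ∈ U := hcon
      linarith [hGU w hwU, hw.le]
    have h1 := hside z hz
    have h2 := hside (-z) (by rw [map_neg, hz, neg_zero])
    rw [map_neg, norm_neg] at h2
    rw [abs_le]; constructor <;> linarith
  set p : Subspace ℝ E := LinearMap.ker (G : E →ₗ[ℝ] ℝ) with hp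
  set frN : p →L[ℝ] ℝ := fr.comp (Submodule.subtypeL p) with hfrN
  have hfrNnorm : ‖frN‖ ≤ δ := by
    apply ContinuousLinearMap.opNorm_le_bound _ hδ.le
    rintro ⟨w, hw⟩
    rw [LinearMap.mem_ker] at hw
    simpa [hfrN] using hker w hw
  obtain ⟨h, hext, hnormh⟩ := exists_extension_norm_eq p frN
  have hhnorm : ‖h‖ ≤ δ := le_of_eq_of_le hnormh hfrNnorm
  set c₀ : ℝ := fr y - h y with hc₀
  have hdecomp : ∀ z : E, fr z - h z = c₀ * G z := by
    intro z
    have hker' : z - G z • y ∈ p := by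
      rw [hp, LinearMap.mem_ker]
      show G (z - G z • y) = 0
      rw [map_sub, map_smul, smul_eq_mul, hGy, mul_one, sub_self]
    have h9 := hext ⟨z - G z • y, hker'⟩
    simp only [hfrN, ContinuousLinearMap.comp_apply, Submodule.subtypeL_apply,
      Submodule.coe_mk] at h9
    rw [map_sub, map_sub, map_smul, map_smul, smul_eq_mul, smul_eq_mul] at h9
    rw [hc₀]
    linear_combination -h9
  have habs : |c₀| = ‖fr - h‖ := by
    apply le_antisymm
    · calc |c₀| = |c₀ * G y| := by rw [hGy, mul_one]
      _ = |(fr - h) y| := by rw [ContinuousLinearMap.sub_apply, hdecomp y]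
      _ = ‖(fr - h) y‖ := (Real.norm_eq_abs _).symm
      _ ≤ ‖fr - h‖ * ‖y‖ := ContinuousLinearMap.le_opNorm _ _
      _ = ‖fr - h‖ := by rw [hy1, mul_one]
    · apply ContinuousLinearMap.opNorm_le_bound _ (abs_nonneg _)
      intro z
      rw [ContinuousLinearMap.sub_apply, Real.norm_eq_abs, hdecomp z, abs_mul]
      calc |c₀| * |G z| ≤ |c₀| * (‖G‖ * ‖z‖) := by
            apply mul_le_mul_of_nonneg_left _ (abs_nonneg _)
            exact (Real.norm_eq_abs _) ▸ ContinuousLinearMap.le_opNorm G z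
      _ = |c₀| * ‖z‖ := by rw [hGnorm, one_mul]
  have hc₀pos : 0 < c₀ := by
    have h1 : h y ≤ δ := by
      calc h y ≤ |h y| := le_abs_self _
      _ = ‖h y‖ := (Real.norm_eq_abs _).symm
      _ ≤ ‖h‖ * ‖y‖ := ContinuousLinearMap.le_opNorm _ _
      _ = ‖h‖ := by rw [hy1, mul_one]
      _ ≤ δ := hhnorm
    rw [hc₀]; linarith
  have hc₀lb : 1 - δ ≤ c₀ := by
    have h1 : ‖fr‖ ≤ ‖fr - h‖ + ‖h‖ := by
      calc ‖fr‖ = ‖(fr - h) + h‖ := by rw [sub_add_cancel]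
      _ ≤ ‖fr - h‖ + ‖h‖ := norm_add_le _ _
    rw [hfr] at h1
    rw [← abs_of_pos hc₀pos, habs]
    linarith
  refine ⟨G, hGnorm, hGy, hy1, ?_⟩
  apply ContinuousLinearMap.opNorm_le_bound _ (by linarith)
  intro z
  have hz1 : (fr - G) z = h z + (c₀ - 1) * G z := by
    rw [ContinuousLinearMap.sub_apply]
    linear_combination hdecomp z
  have hc₀ub : c₀ ≤ 1 + δ := by
    rw [← abs_of_pos hc₀pos, habs]
    calc ‖fr - h‖ ≤ ‖fr‖ + ‖h‖ := norm_sub_le _ _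
    _ ≤ 1 + δ := by rw [hfr]; linarith
  rw [hz1, Real.norm_eq_abs]
  calc |h z + (c₀ - 1) * G z| ≤ |h z| + |c₀ - 1| * |G z| := by
        rw [← abs_mul]; exact abs_add_le _ _
  _ ≤ ‖h‖ * ‖z‖ + δ * (‖G‖ * ‖z‖) := by
      apply add_le_add
      · exact (Real.norm_eq_abs _) ▸ ContinuousLinearMap.le_opNorm h z
      · apply mul_le_mul _ ((Real.norm_eq_abs _) ▸ ContinuousLinearMap.le_opNorm G z)
          (abs_nonneg _) hδ.le
        rw [abs_le]; constructor <;> linarith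
  _ ≤ δ * ‖z‖ + δ * (1 * ‖z‖) := by
      apply add_le_add (mul_le_mul_of_nonneg_right hhnorm (norm_nonneg _))
      rw [hGnorm]
  _ = 2 * δ * ‖z‖ := by ring

-- rotation helper
lemma rot {𝕜 : Type} [RCLike 𝕜] (w : 𝕜) : ∃ θ : 𝕜, ‖θ‖ = 1 ∧ θ * w = (‖w‖ : 𝕜) := by
  rcases eq_or_ne w 0 with rfl | hw
  · exact ⟨1, by simp, by simp⟩
  · refine ⟨(‖w‖ : 𝕜) / w, ?_, ?_⟩
    · rw [norm_div, norm_ofReal, abs_of_nonneg (norm_nonneg _),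
        div_self (norm_ne_zero_iff.2 hw)]
    · field_simp
lemma re_one_norm_le_one {𝕜 : Type} [RCLike 𝕜] {w : 𝕜} (h1 : re w = 1) (h2 : ‖w‖ ≤ 1) :
    w = 1 := by
  have h3 : 1 ≤ ‖w‖ := by
    calc (1:ℝ) = re w := h1.symm
    _ ≤ |re w| := le_abs_self _
    _ ≤ ‖w‖ := abs_re_le_norm w
  have h4 : ‖w‖ = 1 := le_antisymm h2 h3
  have h5 : re w * re w + im w * im w = 1 := by
    have := (norm_sq_eq_def (z := w)).symm
    rw [h4] at this
    simpa using this
  have h6 : im w = 0 := by nlinarith [sq_nonneg (im w), sq_nonneg (re w)]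
  apply RCLike.ext
  · rw [h1, one_re]
  · rw [h6, one_im]

lemma bpb_main {𝕜 X : Type} [RCLike 𝕜] [NormedAddCommGroup X] [NormedSpace 𝕜 X]
    [CompleteSpace X] (x : X) (f : X →L[𝕜] 𝕜) (hx : ‖x‖ = 1) (hf : ‖f‖ = 1)
    {ε' : ℝ} (hε0 : 0 < ε') (hε1 : ε' < 1) (hfx : re (f x) > 1 - ε' ^ 2 / 2) :
    ∃ (y : X) (g : X →L[𝕜] 𝕜), ‖y‖ = 1 ∧ ‖g‖ = 1 ∧ g y = 1 ∧ ‖y - x‖ ≤ ε' ∧ ‖g - f‖ ≤ ε' := by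
  letI : Module ℝ X := RestrictScalars.module ℝ 𝕜 X
  letI : IsScalarTower ℝ 𝕜 X := RestrictScalars.isScalarTower ℝ 𝕜 X
  letI : NormedSpace ℝ X := NormedSpace.restrictScalars ℝ 𝕜 X
  set fr : X →L[ℝ] ℝ := reCLM.comp (f.restrictScalars ℝ) with hfrdef
  have hfrapp : ∀ z : X, fr z = re (f z) := fun z => rfl
  have hfrnorm : ‖fr‖ = 1 := by
    apply le_antisymm
    · apply ContinuousLinearMap.opNorm_le_bound _ zero_le_one
      intro z
      rw [hfrapp, Real.norm_eq_abs, one_mul]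
      calc |re (f z)| ≤ ‖f z‖ := abs_re_le_norm _
      _ ≤ ‖f‖ * ‖z‖ := ContinuousLinearMap.le_opNorm _ _
      _ = ‖z‖ := by rw [hf, one_mul]
    · rw [← hf]
      apply ContinuousLinearMap.opNorm_le_bound _ (norm_nonneg fr)
      intro z
      obtain ⟨θ, hθ1, hθ2⟩ := rot (f z)
      have h1 : fr (θ • z) = ‖f z‖ := by
        rw [hfrapp, map_smul, smul_eq_mul, hθ2, ofReal_re]
      calc ‖f z‖ = fr (θ • z) := h1.symm
      _ ≤ |fr (θ • z)| := le_abs_self _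
      _ ≤ ‖fr‖ * ‖θ • z‖ := (Real.norm_eq_abs _) ▸ ContinuousLinearMap.le_opNorm fr _
      _ = ‖fr‖ * ‖z‖ := by rw [norm_smul, hθ1, one_mul]
  have hfrbd : ∀ z : X, ‖z‖ ≤ 1 → 0 ≤ 1 - fr z := by
    intro z hz
    have : fr z ≤ 1 := by
      calc fr z ≤ |fr z| := le_abs_self _
      _ ≤ ‖fr‖ * ‖z‖ := (Real.norm_eq_abs _) ▸ ContinuousLinearMap.le_opNorm fr z
      _ ≤ 1 := by rw [hfrnorm, one_mul]; exact hz
    linarith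
  have hδ0 : (0:ℝ) < ε' / 2 := by linarith
  obtain ⟨y, hy1, hy2, hy3⟩ := ekeland_aux (fun z : X => 1 - fr z)
    (continuous_const.sub fr.continuous) hfrbd hδ0 (le_of_eq hx)
  have hfrx : 1 - ε'^2/2 < fr x := hfx
  have hfry : 1 - ε'^2/2 ≤ fr y := by
    have h0 : 0 ≤ ε'/2 * ‖y - x‖ := by positivity
    linarith
  have hyx : ‖y - x‖ ≤ ε' := by
    have h1 : 0 ≤ 1 - fr y := hfrbd y hy1
    have h2 : ε'/2 * ‖y - x‖ ≤ ε'^2/2 := by linarith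
    nlinarith
  have hmax : ∀ z : X, ‖z‖ ≤ 1 → fr z ≤ fr y + (ε'/2) * ‖z - y‖ := by
    intro z hz
    have := hy3 z hz
    linarith
  obtain ⟨G, hG1, hGy, hynorm, hGdiff⟩ := real_bpb_core fr hfrnorm hy1 hδ0
    (by linarith) (by positivity : (0:ℝ) ≤ ε'^2/2) (by nlinarith) hfry hmax
  have hGdiff' : ‖fr - G‖ ≤ ε' := by
    calc ‖fr - G‖ ≤ 2 * (ε'/2) := hGdiff
    _ = ε' := by ring
  set g : X →L[𝕜] 𝕜 := G.extendTo𝕜' with hgdef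
  have hgre : ∀ z : X, re (g z) = G z := by
    intro z
    rw [hgdef, ContinuousLinearMap.extendTo𝕜', ContinuousLinearMap.extendTo𝕜'_apply]
    simp [map_sub, ofReal_re, mul_re, I_re, ofReal_im]
  have hgnorm : ‖g‖ = 1 := by
    rw [hgdef, ContinuousLinearMap.extendTo𝕜', ContinuousLinearMap.norm_extendTo𝕜', hG1]
  have hgy : g y = 1 := by
    apply re_one_norm_le_one
    · rw [hgre, hGy]
    · calc ‖g y‖ ≤ ‖g‖ * ‖y‖ := ContinuousLinearMap.le_opNorm _ _
      _ = 1 := by rw [hgnorm, hynorm, one_mul]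
  refine ⟨y, g, hynorm, hgnorm, hgy, hyx, ?_⟩
  apply ContinuousLinearMap.opNorm_le_bound _ hε0.le
  intro z
  obtain ⟨θ, hθ1, hθ2⟩ := rot ((g - f) z)
  have h1 : ‖(g - f) z‖ = re ((g - f) (θ • z)) := by
    rw [map_smul, smul_eq_mul, hθ2, ofReal_re]
  rw [h1]
  have h2 : re ((g - f) (θ • z)) = G (θ • z) - fr (θ • z) := by
    rw [ContinuousLinearMap.sub_apply, map_sub, hgre, hfrapp]
  rw [h2]
  calc G (θ • z) - fr (θ • z) ≤ |fr (θ • z) - G (θ • z)| := by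
        rw [abs_sub_comm]; exact le_abs_self _
  _ = ‖(fr - G) (θ • z)‖ := by rw [ContinuousLinearMap.sub_apply, Real.norm_eq_abs]
  _ ≤ ‖fr - G‖ * ‖θ • z‖ := ContinuousLinearMap.le_opNorm _ _
  _ = ‖fr - G‖ * ‖z‖ := by rw [norm_smul, hθ1, one_mul]
  _ ≤ ε' * ‖z‖ := mul_le_mul_of_nonneg_right hGdiff' (norm_nonneg _)

/-- `f` strongly exposes the bounded set `C` at `x₀`. -/
def StronglyExposes {𝕜 X : Type} [RCLike 𝕜] [NormedAddCommGroup X] [NormedSpace 𝕜 X]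
    (f : X →L[𝕜] 𝕜) (C : Set X) (x₀ : X) : Prop :=
  x₀ ∈ C ∧ (∀ x ∈ C, re (f x) ≤ re (f x₀)) ∧
    ∀ u : ℕ → X, (∀ n, u n ∈ C) →
      Tendsto (fun n => re (f (u n))) atTop (𝓝 (re (f x₀))) →
      Tendsto u atTop (𝓝 x₀)

/-- `f` strongly exposes the closed unit ball at `x₀`. -/
def StronglyExposesBall {𝕜 X : Type} [RCLike 𝕜] [NormedAddCommGroup X] [NormedSpace 𝕜 X]
    (f : X →L[𝕜] 𝕜) (x₀ : X) : Prop :=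
  ‖x₀‖ ≤ 1 ∧ re (f x₀) = ‖f‖ ∧
    ∀ u : ℕ → X, (∀ n, ‖u n‖ ≤ 1) →
      Tendsto (fun n => re (f (u n))) atTop (𝓝 ‖f‖) →
      Tendsto u atTop (𝓝 x₀)

/-- `T` absolutely strongly exposes the closed unit ball at `x₀`. -/
def AbsStronglyExposes {𝕜 X Y : Type} [RCLike 𝕜] [NormedAddCommGroup X] [NormedSpace 𝕜 X]
    [NormedAddCommGroup Y] [NormedSpace 𝕜 Y] (T : X →L[𝕜] Y) (x₀ : X) : Prop :=
  ‖x₀‖ ≤ 1 ∧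
    ∀ u : ℕ → X, (∀ n, ‖u n‖ ≤ 1) →
      Tendsto (fun n => ‖T (u n)‖) atTop (𝓝 ‖T‖) →
      ∃ θ : ℕ → 𝕜, (∀ n, ‖θ n‖ = 1) ∧ Tendsto (fun n => θ n • u n) atTop (𝓝 x₀)

/-- `X` has property [P]: a Bishop–Phelps–Bollobás type property for strongly exposing
functionals, witnessed by some function `ε ↦ η(ε)`. -/
def PropertyP (𝕜 X : Type) [RCLike 𝕜] [NormedAddCommGroup X] [NormedSpace 𝕜 X] : Prop :=
  ∃ η : ℝ → ℝ, ∀ ε : ℝ, 0 < ε → ε < 1 → 0 < η ε ∧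
    ∀ (x : X) (f : X →L[𝕜] 𝕜), ‖x‖ = 1 → ‖f‖ = 1 → re (f x) > 1 - η ε →
      ∃ (y : X) (g : X →L[𝕜] 𝕜), (∃ y' : X, StronglyExposesBall g y') ∧
        ‖y‖ = 1 ∧ ‖g‖ = 1 ∧ g y = 1 ∧ ‖g - f‖ < ε ∧ ‖y - x‖ < ε

/-- `X` has property [P] witnessed by the specific function `ε ↦ ε²/2`. -/
def PropertyPSq (𝕜 X : Type) [RCLike 𝕜] [NormedAddCommGroup X] [NormedSpace 𝕜 X] : Prop :=
  ∀ ε : ℝ, 0 < ε → ε < 1 →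
    ∀ (x : X) (f : X →L[𝕜] 𝕜), ‖x‖ = 1 → ‖f‖ = 1 → re (f x) > 1 - ε ^ 2 / 2 →
      ∃ (y : X) (g : X →L[𝕜] 𝕜), (∃ y' : X, StronglyExposesBall g y') ∧
        ‖y‖ = 1 ∧ ‖g‖ = 1 ∧ g y = 1 ∧ ‖g - f‖ < ε ∧ ‖y - x‖ < ε

/-- The pairs of strongly exposed points and strongly exposing functionals are dense in `Π(X)`. -/
def DensePairs (𝕜 X : Type) [RCLike 𝕜] [NormedAddCommGroup X] [NormedSpace 𝕜 X] : Prop :=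
  ∀ (x : X) (f : X →L[𝕜] 𝕜), ‖x‖ = 1 → ‖f‖ = 1 → f x = 1 →
    ∀ ε : ℝ, 0 < ε → ∃ (y : X) (g : X →L[𝕜] 𝕜),
      (∃ h : X →L[𝕜] 𝕜, StronglyExposesBall h y) ∧
      (∃ y' : X, StronglyExposesBall g y') ∧
      ‖g‖ = 1 ∧ g y = 1 ∧ ‖y - x‖ < ε ∧ ‖g - f‖ < ε


lemma exposes_self {𝕜 X : Type} [RCLike 𝕜] [NormedAddCommGroup X] [NormedSpace 𝕜 X]
    {g : X →L[𝕜] 𝕜} {y' y : X} (hse : StronglyExposesBall g y') (hy : ‖y‖ ≤ 1)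
    (hg : ‖g‖ = 1) (hgy : g y = 1) : StronglyExposesBall g y := by
  have h1 : Tendsto (fun _ : ℕ => y) atTop (𝓝 y') := by
    apply hse.2.2 (fun _ => y) (fun _ => hy)
    have : re (g y) = ‖g‖ := by rw [hgy, hg, one_re]
    rw [this]
    exact tendsto_const_nhds
  have h2 : y' = y := tendsto_nhds_unique h1 tendsto_const_nhds
  exact h2 ▸ hse

lemma p_to_d {𝕜 X : Type} [RCLike 𝕜] [NormedAddCommGroup X] [NormedSpace 𝕜 X] :
    PropertyP 𝕜 X → DensePairs 𝕜 X := by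
  rintro ⟨η, hη⟩ x f hx hf hfx ε hε
  have h12 : (0:ℝ) < min ε (1/2) := lt_min hε (by norm_num)
  have h121 : min ε (1/2) < 1 := lt_of_le_of_lt (min_le_right _ _) (by norm_num)
  obtain ⟨hpos, H⟩ := hη _ h12 h121
  have hre : re (f x) > 1 - η (min ε (1/2)) := by
    rw [hfx, one_re]; linarith
  obtain ⟨y, g, ⟨y', hy'⟩, hy, hg, hgy, hgf, hyx⟩ := H x f hx hf hre
  have hseb : StronglyExposesBall g y := exposes_self hy' (le_of_eq hy) hg hgy
  exact ⟨y, g, ⟨g, hseb⟩, ⟨y, hseb⟩, hg, hgy,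
    lt_of_lt_of_le hyx (min_le_left _ _), lt_of_lt_of_le hgf (min_le_left _ _)⟩

lemma psq_to_p {𝕜 X : Type} [RCLike 𝕜] [NormedAddCommGroup X] [NormedSpace 𝕜 X] :
    PropertyPSq 𝕜 X → PropertyP 𝕜 X := by
  intro h
  exact ⟨fun ε => ε ^ 2 / 2, fun ε h1 h2 => ⟨div_pos (pow_pos h1 2) two_pos, h ε h1 h2⟩⟩

lemma d_to_psq {𝕜 X : Type} [RCLike 𝕜] [NormedAddCommGroup X] [NormedSpace 𝕜 X]
    [CompleteSpace X] : DensePairs 𝕜 X → PropertyPSq 𝕜 X := by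
  intro d ε hε hε1 x f hx hf hfx
  set m : ℝ := max (1 - re (f x)) 0 with hm
  have hm0 : 0 ≤ m := le_max_right _ _
  have hε2 : (0:ℝ) < ε ^ 2 := pow_pos hε 2
  have hm2 : 2 * m < ε ^ 2 := by
    have h1 : 1 - re (f x) < ε ^ 2 / 2 := by linarith
    have h2 : m < ε ^ 2 / 2 := max_lt h1 (by linarith)
    linarith
  set ε' : ℝ := Real.sqrt ((2 * m + ε ^ 2) / 2) with he'
  have hargpos : (0:ℝ) < (2 * m + ε ^ 2) / 2 := by linarith
  have hsq : ε' ^ 2 = (2 * m + ε ^ 2) / 2 := Real.sq_sqrt hargpos.le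
  have hε'0 : 0 < ε' := Real.sqrt_pos.2 hargpos
  have hε'ε : ε' < ε := by nlinarith [hsq]
  have hfx' : re (f x) > 1 - ε' ^ 2 / 2 := by
    have h1 : 1 - re (f x) ≤ m := le_max_left _ _
    rw [hsq]; linarith
  obtain ⟨y, g, hy, hg, hgy, hyx, hgf⟩ := bpb_main x f hx hf hε'0 (lt_trans hε'ε hε1) hfx'
  have hgap : 0 < ε - ε' := by linarith
  obtain ⟨y₂, g₂, ⟨h, hh⟩, hse2, hg2, hgy2, hy2y, hg2g⟩ := d y g hy hg hgy (ε - ε') hgap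
  refine ⟨y₂, g₂, hse2, ?_, hg2, hgy2, ?_, ?_⟩
  · apply le_antisymm hh.1
    calc (1:ℝ) = ‖g₂ y₂‖ := by rw [hgy2]; simp
    _ ≤ ‖g₂‖ * ‖y₂‖ := ContinuousLinearMap.le_opNorm _ _
    _ = ‖y₂‖ := by rw [hg2, one_mul]
  · calc ‖g₂ - f‖ = ‖(g₂ - g) + (g - f)‖ := by congr 1; abel
    _ ≤ ‖g₂ - g‖ + ‖g - f‖ := norm_add_le _ _
    _ < (ε - ε') + ε' := by apply add_lt_add_of_lt_of_le hg2g hgf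
    _ = ε := by ring
  · calc ‖y₂ - x‖ = ‖(y₂ - y) + (y - x)‖ := by congr 1; abel
    _ ≤ ‖y₂ - y‖ + ‖y - x‖ := norm_add_le _ _
    _ < (ε - ε') + ε' := by apply add_lt_add_of_lt_of_le hy2y hyx
    _ = ε := by ring

theorem stmt11 {𝕜 X : Type} [RCLike 𝕜]
    [NormedAddCommGroup X] [NormedSpace 𝕜 X] [CompleteSpace X] :
    (PropertyP 𝕜 X ↔ DensePairs 𝕜 X) ∧ (DensePairs 𝕜 X ↔ PropertyPSq 𝕜 X) :=
  ⟨⟨p_to_d, fun d => psq_to_p (d_to_psq d)⟩,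
   ⟨d_to_psq, fun p => p_to_d (psq_to_p p)⟩⟩
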